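/- Let ρ(x) = ‖x‖^α with α ∈ [0, 2) and m = ρ dx on R^d. Then there exist constants c_2, c_3 > 0 such that for all t > 0 and x ∈ R^d: c_2 t^{(α+d)/2} ≤ m(B_{√t}(x)) ≤ c_3 t^{d/2} (‖x‖ + √t)^α. -/

import Mathlib

open MeasureTheory Metric

theorem weighted_ball_two_sided_bound
    (d : ℕ) (hd : 3 ≤ d) (α : ℝ) (hα1 : 0 ≤ α) (hα2 : α < 2) :
    ∃ c2 c3 : ℝ, 0 < c2 ∧ 0 < c3 ∧
      ∀ (t : ℝ) (x : EuclideanSpace ℝ (Fin d)), 0 < t →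
        c2 * Real.sqrt t ^ (α + d) ≤ ∫ y in Metric.ball x (Real.sqrt t), ‖y‖ ^ α ∧
        (∫ y in Metric.ball x (Real.sqrt t), ‖y‖ ^ α)
          ≤ c3 * Real.sqrt t ^ (d : ℝ) * (‖x‖ + Real.sqrt t) ^ α := by
  have hne : Nonempty (Fin d) := ⟨⟨0, by omega⟩⟩
  set C := (volume (Metric.ball (0 : EuclideanSpace ℝ (Fin d)) 1)).toReal with hCdef
  have hCpos : 0 < C :=
    ENNReal.toReal_pos (measure_ball_pos volume 0 one_pos).ne' measure_ball_lt_top.ne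
  have h4pos : (0:ℝ) < 4 ^ (α + d) := Real.rpow_pos_of_pos (by norm_num) _
  refine ⟨C / 4 ^ (α + d), C, div_pos hCpos h4pos, hCpos, ?_⟩
  classical
  intro t x ht
  set r := Real.sqrt t with hrdef
  have hrpos : 0 < r := Real.sqrt_pos.2 ht
  have hcont : Continuous fun y : EuclideanSpace ℝ (Fin d) => ‖y‖ ^ α :=
    continuous_norm.rpow_const fun y => Or.inr hα1
  have hnonneg : ∀ y : EuclideanSpace ℝ (Fin d), 0 ≤ ‖y‖ ^ α :=
    fun y => Real.rpow_nonneg (norm_nonneg y) α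
  have hvol : ∀ (z : EuclideanSpace ℝ (Fin d)) (s : ℝ), 0 ≤ s →
      (volume (Metric.ball z s)).toReal = s ^ d * C := by
    intro z s hs
    rw [Measure.addHaar_ball volume z hs, finrank_euclideanSpace_fin, ENNReal.toReal_mul,
      ENNReal.toReal_ofReal (pow_nonneg hs d)]
  have hint : ∀ (z : EuclideanSpace ℝ (Fin d)) (s : ℝ),
      IntegrableOn (fun y : EuclideanSpace ℝ (Fin d) => ‖y‖ ^ α) (Metric.ball z s) volume :=
    fun z s => (hcont.locallyIntegrable.integrableOn_isCompact
      (isCompact_closedBall z s)).mono_set ball_subset_closedBall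
  constructor
  · -- lower bound
    set u : EuclideanSpace ℝ (Fin d) :=
      if x = 0 then EuclideanSpace.single ⟨0, by omega⟩ (1:ℝ) else ‖x‖⁻¹ • x with hu
    set z : EuclideanSpace ℝ (Fin d) := x + (r / 2) • u with hz
    have hzx : ‖z - x‖ = r / 2 := by
      have hu1 : ‖u‖ = 1 := by
        rw [hu]
        split_ifs with hx
        · simp [EuclideanSpace.norm_single]
        · rw [norm_smul, norm_inv, norm_norm, inv_mul_cancel₀ (norm_ne_zero_iff.2 hx)]
      rw [hz]
      simp [norm_smul, hu1, abs_of_nonneg hrpos.le]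
    have hznorm : r / 2 ≤ ‖z‖ := by
      rw [hz, hu]
      split_ifs with hx
      · subst hx
        rw [add_comm, add_zero, norm_smul, EuclideanSpace.norm_single]
        simp [abs_of_nonneg hrpos.le]
      · have : x + (r / 2) • (‖x‖⁻¹ • x) = (1 + (r / 2) * ‖x‖⁻¹) • x := by
          rw [smul_smul, add_smul, one_smul]
        rw [this, norm_smul, Real.norm_eq_abs]
        have hxpos : 0 < ‖x‖ := norm_pos_iff.2 hx
        have h1 : |1 + r / 2 * ‖x‖⁻¹| = 1 + r / 2 * ‖x‖⁻¹ := by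
          rw [abs_of_nonneg]; positivity
        rw [h1, add_mul, one_mul, mul_assoc, inv_mul_cancel₀ hxpos.ne', mul_one]
        linarith
    have hsub : Metric.ball z (r / 4) ⊆ Metric.ball x r := by
      intro y hy
      rw [mem_ball, dist_eq_norm] at hy ⊢
      calc ‖y - x‖ ≤ ‖y - z‖ + ‖z - x‖ := norm_sub_le_norm_sub_add_norm_sub y z x
        _ < r / 4 + r / 2 := by rw [hzx]; linarith
        _ ≤ r := by linarith
    have hlow : ∀ y ∈ Metric.ball z (r / 4), (r / 4) ^ α ≤ ‖y‖ ^ α := by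
      intro y hy
      apply Real.rpow_le_rpow (by positivity) _ hα1
      rw [mem_ball, dist_eq_norm] at hy
      have := norm_sub_norm_le y z
      have hzy : ‖z‖ - ‖y‖ ≤ ‖y - z‖ := by
        calc ‖z‖ - ‖y‖ ≤ ‖z - y‖ := norm_sub_norm_le z y
          _ = ‖y - z‖ := norm_sub_rev z y
      linarith
    have step1 : (r / 4) ^ α * ((r/4) ^ d * C) ≤ ∫ y in Metric.ball z (r / 4), ‖y‖ ^ α := by
      have := setIntegral_mono_on
        (integrableOn_const measure_ball_lt_top.ne)
        (hint z (r / 4)) measurableSet_ball hlow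
      calc (r / 4) ^ α * ((r/4) ^ d * C)
          = ∫ _ in Metric.ball z (r / 4), (r / 4) ^ α := by
            rw [setIntegral_const, measureReal_def, hvol z (r/4) (by positivity), smul_eq_mul, mul_comm]
        _ ≤ _ := this
    have step2 : (∫ y in Metric.ball z (r / 4), ‖y‖ ^ α)
        ≤ ∫ y in Metric.ball x r, ‖y‖ ^ α := by
      apply setIntegral_mono_set (hint x r)
        (Filter.Eventually.of_forall fun y => hnonneg y)
        (HasSubset.Subset.eventuallyLE hsub)
    have harith : C / 4 ^ (α + d) * r ^ (α + (d:ℝ)) = (r / 4) ^ α * ((r/4) ^ d * C) := by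
      have h4 : (0:ℝ) < 4 := by norm_num
      have hr4 : (0:ℝ) < r / 4 := by positivity
      have e1 : r ^ (α + (d:ℝ)) / 4 ^ (α + (d:ℝ)) = (r / 4) ^ (α + (d:ℝ)) :=
        (Real.div_rpow hrpos.le h4.le _).symm
      have e2 : (r / 4) ^ (α + (d:ℝ)) = (r / 4) ^ α * (r / 4) ^ (d:ℝ) :=
        Real.rpow_add hr4 _ _
      have e3 : (r / 4) ^ ((d:ℕ):ℝ) = (r / 4) ^ (d:ℕ) := Real.rpow_natCast _ d
      rw [div_mul_eq_mul_div, mul_div_assoc, e1, e2, e3]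
      ring
    calc C / 4 ^ (α + d) * r ^ (α + d) = (r / 4) ^ α * ((r/4) ^ d * C) := harith
      _ ≤ ∫ y in Metric.ball z (r / 4), ‖y‖ ^ α := step1
      _ ≤ _ := step2
  · -- upper bound
    have hub : ∀ y ∈ Metric.ball x r, ‖y‖ ^ α ≤ (‖x‖ + r) ^ α := by
      intro y hy
      apply Real.rpow_le_rpow (norm_nonneg y) _ hα1
      rw [mem_ball, dist_eq_norm] at hy
      have := norm_sub_norm_le y x
      linarith
    calc (∫ y in Metric.ball x r, ‖y‖ ^ α)
        ≤ ∫ _ in Metric.ball x r, (‖x‖ + r) ^ α :=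
          setIntegral_mono_on (hint x r)
            (integrableOn_const measure_ball_lt_top.ne) measurableSet_ball hub
      _ = C * r ^ (d:ℝ) * (‖x‖ + r) ^ α := by
          rw [setIntegral_const, measureReal_def, hvol x r hrpos.le, smul_eq_mul, Real.rpow_natCast]
          ring
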